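/- Let f, g ∈ ℂ⟦x,y⟧ be such that the intersection number ν := dim_ℂ ℂ⟦x,y⟧/(f, g) is finite. Then for every n ≥ 1, dim_ℂ ℂ⟦x,y⟧/(f(x^n, y), g(x^n, y)) = n·ν. (This computes the intersection multiplicity at a preimage of a type-1 point of the Kummer transforms of two local branches: if δ_i and δ_j are distinct local branches meeting at a point on exactly one coordinate axis, then their pullbacks satisfy (δ̃_i · δ̃_j)_Q = n (δ_i · δ_j)_P.) -/

import Mathlib

noncomputable section

/-- Formal partial derivative `∂f/∂(x_i)` of a two-variable formal power series. -/
def pderiv2 (i : Fin 2) (f : MvPowerSeries (Fin 2) ℂ) : MvPowerSeries (Fin 2) ℂ :=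
  fun e => ((e i : ℂ) + 1) * MvPowerSeries.coeff (e + Finsupp.single i 1) f

/-- Substitution `x ↦ xⁿ` in a two-variable formal power series `f(x,y)`:
the coefficient of `x^a y^b` in `f(xⁿ, y)` is the coefficient of `x^(a/n) y^b` of `f`
when `n ∣ a`, and `0` otherwise. -/
def substX (n : ℕ) (f : MvPowerSeries (Fin 2) ℂ) : MvPowerSeries (Fin 2) ℂ :=
  fun e => if n ∣ e 0
    then MvPowerSeries.coeff (Finsupp.single 0 (e 0 / n) + Finsupp.single 1 (e 1)) f
    else 0

/-- Substitution `x ↦ xⁿ`, `y ↦ yⁿ` in a two-variable formal power series `f(x,y)`. -/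
def substXY (n : ℕ) (f : MvPowerSeries (Fin 2) ℂ) : MvPowerSeries (Fin 2) ℂ :=
  fun e => if n ∣ e 0 ∧ n ∣ e 1
    then MvPowerSeries.coeff (Finsupp.single 0 (e 0 / n) + Finsupp.single 1 (e 1 / n)) f
    else 0

/-- The one-variable power series `f(0, y)`. -/
def restY (f : MvPowerSeries (Fin 2) ℂ) : PowerSeries ℂ :=
  PowerSeries.mk fun b => MvPowerSeries.coeff (Finsupp.single 1 b) f

/-- The one-variable power series `f(x, 0)`. -/
def restX (f : MvPowerSeries (Fin 2) ℂ) : PowerSeries ℂ :=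
  PowerSeries.mk fun a => MvPowerSeries.coeff (Finsupp.single 0 a) f

open MvPowerSeries Finsupp

abbrev R2 := MvPowerSeries (Fin 2) ℂ

/-- stretch exponent -/
def str (n : ℕ) (d : Fin 2 →₀ ℕ) : Fin 2 →₀ ℕ :=
  Finsupp.single 0 (n * d 0) + Finsupp.single 1 (d 1)

/-- squeeze exponent -/
def sqz (n : ℕ) (e : Fin 2 →₀ ℕ) : Fin 2 →₀ ℕ :=
  Finsupp.single 0 (e 0 / n) + Finsupp.single 1 (e 1)

@[simp] lemma pair_apply0 (a b : ℕ) :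
    ((Finsupp.single 0 a + Finsupp.single 1 b : Fin 2 →₀ ℕ)) 0 = a := by simp
@[simp] lemma pair_apply1 (a b : ℕ) :
    ((Finsupp.single 0 a + Finsupp.single 1 b : Fin 2 →₀ ℕ)) 1 = b := by simp

lemma fin2_ext (d : Fin 2 →₀ ℕ) :
    Finsupp.single 0 (d 0) + Finsupp.single 1 (d 1) = d := by
  ext i
  fin_cases i <;> simp

lemma substX_coeff (n : ℕ) (f : R2) (e : Fin 2 →₀ ℕ) :
    MvPowerSeries.coeff e (substX n f) =
      if n ∣ e 0 then MvPowerSeries.coeff (sqz n e) f else 0 := rfl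

lemma str_add (n : ℕ) (d d' : Fin 2 →₀ ℕ) : str n (d + d') = str n d + str n d' := by
  ext i; fin_cases i <;> simp [str, mul_add]

lemma sqz_str (n : ℕ) (hn : 0 < n) (d : Fin 2 →₀ ℕ) : sqz n (str n d) = d := by
  rw [← fin2_ext d]
  ext i; fin_cases i <;> simp [str, sqz, Nat.mul_div_cancel_left _ hn]

lemma str_sqz (n : ℕ) (e : Fin 2 →₀ ℕ) (h : n ∣ e 0) : str n (sqz n e) = e := by
  rw [← fin2_ext e]
  ext i; fin_cases i <;> simp [str, sqz, Nat.mul_div_cancel' h]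

lemma sqz_add (n : ℕ) (hn : 0 < n) (u v : Fin 2 →₀ ℕ) (hu : n ∣ u 0) (hv : n ∣ v 0) :
    sqz n (u + v) = sqz n u + sqz n v := by
  conv_rhs => rw [← sqz_str n hn (sqz n u + sqz n v)]
  rw [str_add, str_sqz n u hu, str_sqz n v hv]

lemma substX_mul (n : ℕ) (hn : 0 < n) (p q : R2) :
    substX n (p * q) = substX n p * substX n q := by
  classical
  ext e
  rw [substX_coeff]
  conv_rhs => rw [MvPowerSeries.coeff_mul]
  simp only [substX_coeff]
  by_cases h : n ∣ e 0
  · rw [if_pos h, MvPowerSeries.coeff_mul]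
    refine Finset.sum_of_injOn (fun st => (str n st.1, str n st.2)) ?_ ?_ ?_ ?_
    · intro a _ b _ hab
      have := congrArg (fun uv : (Fin 2 →₀ ℕ) × (Fin 2 →₀ ℕ) => (sqz n uv.1, sqz n uv.2)) hab
      simpa [sqz_str n hn, Prod.ext_iff] using this
    · rintro ⟨s, t⟩ hst
      simp only [Finset.coe_sort_coe, Finset.mem_coe, Finset.HasAntidiagonal.mem_antidiagonal] at hst ⊢
      rw [← str_add, hst, str_sqz n e h]
    · rintro ⟨u, v⟩ huv himg
      rw [Finset.HasAntidiagonal.mem_antidiagonal] at huv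
      by_cases hu : n ∣ u 0
      · have hv : n ∣ v 0 := by
          have hd : n ∣ u 0 + v 0 := by
            rw [show u 0 + v 0 = e 0 from by rw [← huv]; simp]
            exact h
          exact (Nat.dvd_add_right hu).mp hd
        exact absurd ⟨(sqz n u, sqz n v), by
          simp only [Finset.coe_sort_coe, Finset.mem_coe, Finset.HasAntidiagonal.mem_antidiagonal]
          rw [← sqz_add n hn u v hu hv, huv], by
          simp [str_sqz n u hu, str_sqz n v hv]⟩ himg
      · rw [if_neg hu, zero_mul]
    · rintro ⟨s, t⟩ hst
      have h1 : n ∣ str n s 0 := by simp [str]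
      have h2 : n ∣ str n t 0 := by simp [str]
      simp only
      rw [if_pos h1, if_pos h2, sqz_str n hn, sqz_str n hn]
  · rw [if_neg h]
    symm
    apply Finset.sum_eq_zero
    rintro ⟨u, v⟩ huv
    rw [Finset.HasAntidiagonal.mem_antidiagonal] at huv
    by_cases hu : n ∣ u 0
    · have : ¬ n ∣ v 0 := by
        intro hv
        exact h (by rw [show e 0 = u 0 + v 0 from by rw [← huv]; simp]; exact Nat.dvd_add hu hv)
      rw [if_neg this, mul_zero]
    · rw [if_neg hu, zero_mul]

lemma substX_add (n : ℕ) (p q : R2) :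
    substX n (p + q) = substX n p + substX n q := by
  ext e
  simp only [substX_coeff, map_add]
  split_ifs <;> simp

lemma substX_smul (n : ℕ) (c : ℂ) (p : R2) :
    substX n (c • p) = c • substX n p := by
  ext e
  simp only [substX_coeff, map_smul]
  split_ifs <;> simp


def Psi (n : ℕ) (hn : 0 < n) (h : Fin n → R2) : R2 :=
  fun e => h ⟨e 0 % n, Nat.mod_lt _ hn⟩ (sqz n e)

def Phi (n : ℕ) (h : R2) : Fin n → R2 :=
  fun i d => h (Finsupp.single 0 (n * d 0 + i) + Finsupp.single 1 (d 1))

lemma Phi_Psi (n : ℕ) (hn : 0 < n) (h : Fin n → R2) : Phi n (Psi n hn h) = h := by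
  funext i
  ext d
  show Psi n hn h _ = h i d
  unfold Psi
  have h0 : ((Finsupp.single 0 (n * d 0 + ↑i) + Finsupp.single 1 (d 1) : Fin 2 →₀ ℕ)) 0
      = n * d 0 + ↑i := pair_apply0 _ _
  have h1 : ((Finsupp.single 0 (n * d 0 + ↑i) + Finsupp.single 1 (d 1) : Fin 2 →₀ ℕ)) 1
      = d 1 := pair_apply1 _ _
  have hmod : (n * d 0 + ↑i) % n = ↑i := by
    rw [Nat.mul_add_mod]
    exact Nat.mod_eq_of_lt i.isLt
  have hdiv : (n * d 0 + ↑i) / n = d 0 := by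
    rw [Nat.mul_add_div hn, Nat.div_eq_of_lt i.isLt, add_zero]
  have hidx : (⟨(Finsupp.single 0 (n * d 0 + ↑i) + Finsupp.single 1 (d 1) : Fin 2 →₀ ℕ) 0 % n,
      Nat.mod_lt _ hn⟩ : Fin n) = i := by
    apply Fin.ext
    simp [h0, hmod]
  rw [hidx]
  congr 1
  unfold sqz
  rw [h0, h1, hdiv, fin2_ext]

lemma Psi_Phi (n : ℕ) (hn : 0 < n) (H : R2) : Psi n hn (Phi n H) = H := by
  ext e
  show H _ = MvPowerSeries.coeff e H
  rw [MvPowerSeries.coeff_apply]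
  congr 1
  ext i
  fin_cases i <;> simp [sqz, Nat.div_add_mod]

def psiEquiv (n : ℕ) (hn : 0 < n) : (Fin n → R2) ≃ₗ[ℂ] R2 where
  toFun := Psi n hn
  invFun := Phi n
  map_add' := fun _ _ => rfl
  map_smul' := fun _ _ => rfl
  left_inv := Phi_Psi n hn
  right_inv := Psi_Phi n hn

lemma psi_sum (n : ℕ) (hn : 0 < n) (h : Fin n → R2) :
    Psi n hn h = ∑ i : Fin n, substX n (h i) * (MvPowerSeries.X 0) ^ (i : ℕ) := by
  ext e
  rw [map_sum]
  show h _ (sqz n e) = _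
  symm
  rw [Finset.sum_eq_single (⟨e 0 % n, Nat.mod_lt _ hn⟩ : Fin n)]
  · rw [MvPowerSeries.X_pow_eq, MvPowerSeries.coeff_mul_monomial]
    have hle : Finsupp.single (0 : Fin 2) (e 0 % n) ≤ e := by
      rw [Finsupp.single_le_iff]
      exact Nat.mod_le _ _
    rw [if_pos hle, mul_one, substX_coeff]
    have hsub0 : (e - Finsupp.single 0 (e 0 % n) : Fin 2 →₀ ℕ) 0 = e 0 - e 0 % n := by
      simp [Finsupp.tsub_apply]
    have hsub1 : (e - Finsupp.single 0 (e 0 % n) : Fin 2 →₀ ℕ) 1 = e 1 := by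
      simp [Finsupp.tsub_apply]
    have hdm := Nat.div_add_mod (e 0) n
    have hdvd : n ∣ (e - Finsupp.single 0 (e 0 % n) : Fin 2 →₀ ℕ) 0 := by
      rw [hsub0]
      exact ⟨e 0 / n, by omega⟩
    rw [if_pos hdvd, MvPowerSeries.coeff_apply]
    congr 1
    ext i
    fin_cases i
    · show (sqz n _) 0 = (sqz n e) 0
      unfold sqz
      rw [pair_apply0, pair_apply0, hsub0,
        show e 0 - e 0 % n = n * (e 0 / n) from by omega,
        Nat.mul_div_cancel_left _ hn]
    · show (sqz n _) 1 = (sqz n e) 1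
      unfold sqz
      rw [pair_apply1, pair_apply1, hsub1]
  · intro i _ hne
    rw [MvPowerSeries.X_pow_eq, MvPowerSeries.coeff_mul_monomial]
    by_cases hle : Finsupp.single (0 : Fin 2) (i : ℕ) ≤ e
    · rw [if_pos hle, mul_one, substX_coeff]
      have hsub0 : (e - Finsupp.single 0 (i : ℕ) : Fin 2 →₀ ℕ) 0 = e 0 - i := by
        simp [Finsupp.tsub_apply]
      have hneg : ¬ n ∣ e 0 - (i : ℕ) := by
        rintro ⟨k, hk⟩
        have hile : (i : ℕ) ≤ e 0 := by
          rw [Finsupp.single_le_iff] at hle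
          exact hle
        have hlt : (i : ℕ) < n := i.isLt
        have he : e 0 = n * k + i := by
          have := (Nat.sub_eq_iff_eq_add hile).mp hk
          omega
        exact hne (Fin.ext (show (i : ℕ) = e 0 % n from by
          rw [he, Nat.mul_add_mod, Nat.mod_eq_of_lt hlt]))
      rw [hsub0, if_neg hneg]
    · rw [if_neg hle]
  · intro habs
    exact absurd (Finset.mem_univ _) habs

lemma psi_mul_subst (n : ℕ) (hn : 0 < n) (h : Fin n → R2) (w : R2) :
    Psi n hn h * substX n w = Psi n hn (fun i => h i * w) := by
  rw [psi_sum, psi_sum, Finset.sum_mul]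
  apply Finset.sum_congr rfl
  intro i _
  rw [substX_mul n hn]
  ring

lemma map_key (n : ℕ) (hn : 0 < n) (f g : R2) :
    Submodule.map (psiEquiv n hn : (Fin n → R2) →ₗ[ℂ] R2)
      (Submodule.pi Set.univ fun _ : Fin n => (Ideal.span {f, g}).restrictScalars ℂ)
      = (Ideal.span {substX n f, substX n g}).restrictScalars ℂ := by
  apply le_antisymm
  · rintro z hz
    obtain ⟨h, hh, rfl⟩ := Submodule.mem_map.mp hz
    rw [Submodule.mem_pi] at hh
    show Psi n hn h ∈ Ideal.span {substX n f, substX n g}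
    rw [psi_sum]
    apply Ideal.sum_mem
    intro i _
    apply Ideal.mul_mem_right
    obtain ⟨a, b, hab⟩ := Ideal.mem_span_pair.mp (hh i (Set.mem_univ i))
    rw [← hab, substX_add, substX_mul n hn, substX_mul n hn]
    exact Ideal.add_mem _
      (Ideal.mul_mem_left _ _ (Ideal.subset_span (by simp)))
      (Ideal.mul_mem_left _ _ (Ideal.subset_span (by simp)))
  · intro z hz
    obtain ⟨a, b, hab⟩ := Ideal.mem_span_pair.mp
      (Submodule.restrictScalars_mem ℂ _ z |>.mp hz)
    refine Submodule.mem_map.mpr ⟨fun i => Phi n a i * f + Phi n b i * g, ?_, ?_⟩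
    · rw [Submodule.mem_pi]
      intro i _
      exact Ideal.add_mem _
        (Ideal.mul_mem_left _ _ (Ideal.subset_span (by simp)))
        (Ideal.mul_mem_left _ _ (Ideal.subset_span (by simp)))
    · show Psi n hn (fun i => Phi n a i * f + Phi n b i * g) = z
      rw [show Psi n hn (fun i => Phi n a i * f + Phi n b i * g)
            = Psi n hn (fun i => Phi n a i * f) + Psi n hn (fun i => Phi n b i * g) from rfl,
        ← psi_mul_subst, ← psi_mul_subst, Psi_Phi, Psi_Phi, hab]


set_option maxHeartbeats 2000000 in
/-- Intersection multiplicity of Kummer transforms at a preimage of a type-1 point.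
Let `f, g ∈ ℂ⟦x,y⟧` with finite intersection number `ν = dim_ℂ ℂ⟦x,y⟧/(f, g)`.
Then for every `n ≥ 1`, `dim_ℂ ℂ⟦x,y⟧/(f(xⁿ,y), g(xⁿ,y)) = n·ν`. -/
theorem kummer_type1_intersection (f g : MvPowerSeries (Fin 2) ℂ)
    (hfin : Module.Finite ℂ (MvPowerSeries (Fin 2) ℂ ⧸ Ideal.span {f, g}))
    (ν : ℕ)
    (hν : Module.finrank ℂ (MvPowerSeries (Fin 2) ℂ ⧸ Ideal.span {f, g}) = ν)
    (n : ℕ) (hn : 1 ≤ n) :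
    Module.Finite ℂ
      (MvPowerSeries (Fin 2) ℂ ⧸ Ideal.span {substX n f, substX n g}) ∧
    Module.finrank ℂ
      (MvPowerSeries (Fin 2) ℂ ⧸ Ideal.span {substX n f, substX n g}) = n * ν := by
  have hn' : 0 < n := hn
  set I : Ideal R2 := Ideal.span {f, g} with hI
  set J : Ideal R2 := Ideal.span {substX n f, substX n g} with hJ
  let E : (R2 ⧸ J) ≃ₗ[ℂ] (Fin n → (R2 ⧸ I)) :=
    (Submodule.Quotient.restrictScalarsEquiv ℂ J).symm ≪≫ₗ
      (Submodule.Quotient.equiv _ _ (psiEquiv n hn') (map_key n hn' f g)).symm ≪≫ₗ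
      (Submodule.quotientPi _) ≪≫ₗ
      (LinearEquiv.piCongrRight fun _ => Submodule.Quotient.restrictScalarsEquiv ℂ I)
  haveI := hfin
  constructor
  · exact Module.Finite.equiv E.symm
  · rw [E.finrank_eq, Module.finrank_pi_fintype ℂ, hν]
    simp [Finset.sum_const, mul_comm]
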